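/- arXiv:2510.10837 — 9 statements merged into one kernel-verified Lean document; each statement's English description precedes it below -/
import Mathlib

section
/- Let C be a small connected category and M : C → Vect_K a functor with canonical limit-to-colimit map Ψ_M of finite rank r. Then M decomposes as a direct sum M ≅ (K_C)^r ⊕ N for some functor N : C → Vect_K whose canonical limit-to-colimit map Ψ_N is zero. -/
open CategoryTheory CategoryTheory.Limits

namespace DecompAux7

variable {K : Type} [Field K] {C : Type} [SmallCategory C]
variable (M : C ⥤ ModuleCat.{0} K)

theorem colim_w_app {d d' : C} (f : d ⟶ d') (x : M.obj d) :
    colimit.ι M d' (M.map f x) = colimit.ι M d x := by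
  rw [← colimit.w M f, ConcreteCategory.comp_apply]

theorem lim_w_app {d d' : C} (f : d ⟶ d') (x : (limit M : ModuleCat.{0} K)) :
    M.map f (limit.π M d x) = limit.π M d' x := by
  rw [← limit.w M f, ConcreteCategory.comp_apply]

/-- The subfunctor of `M` given by preimages of `W ⊆ colim M`. -/
noncomputable def auxN (W : Submodule K (colimit M : ModuleCat.{0} K)) : C ⥤ ModuleCat.{0} K where
  obj d := ModuleCat.of K (W.comap (colimit.ι M d).hom)
  map {d d'} f := ModuleCat.ofHom ((M.map f).hom.restrict (p := W.comap (colimit.ι M d).hom)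
    (q := W.comap (colimit.ι M d').hom) (fun x hx => by
      simp only [Submodule.mem_comap] at hx ⊢
      show colimit.ι M d' (M.map f x) ∈ W
      rw [colim_w_app]
      exact hx))
  map_id d := by
    ext x
    show (M.map (𝟙 d)) x.1 = x.1
    rw [M.map_id]
    rfl
  map_comp {d d' d''} f g := by
    ext x
    show (M.map (f ≫ g)) x.1 = M.map g (M.map f x.1)
    rw [M.map_comp]
    rfl

/-- Inclusion of the subfunctor. -/
noncomputable def incl (W : Submodule K (colimit M : ModuleCat.{0} K)) : auxN M W ⟶ M where
  app d := ModuleCat.ofHom (W.comap (colimit.ι M d).hom).subtype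
  naturality {d d'} f := by
    ext x
    rfl

variable {r : ℕ}
variable (σ : (Fin r → K) →ₗ[K] (limit M : ModuleCat.{0} K))
variable (q : (colimit M : ModuleCat.{0} K) →ₗ[K] (Fin r → K))

/-- The constant-functor-to-M natural transformation. -/
noncomputable def constToM : (Functor.const C).obj (ModuleCat.of K (Fin r → K)) ⟶ M where
  app d := ModuleCat.ofHom ((limit.π M d).hom ∘ₗ σ)
  naturality {d d'} f := by
    ext v
    show limit.π M d' (σ v) = M.map f (limit.π M d (σ v))
    rw [lim_w_app]

/-- The M-to-constant-functor natural transformation. -/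
noncomputable def mToConst : M ⟶ (Functor.const C).obj (ModuleCat.of K (Fin r → K)) where
  app d := ModuleCat.ofHom (q ∘ₗ (colimit.ι M d).hom)
  naturality {d d'} f := by
    ext m
    show q (colimit.ι M d' (M.map f m)) = q (colimit.ι M d m)
    rw [colim_w_app]

/-- Projection of `M` onto the subfunctor `auxN`. -/
noncomputable def proj2 (W : Submodule K (colimit M : ModuleCat.{0} K))
    (hmem : ∀ (d : C) (m : M.obj d),
      m - limit.π M d (σ (q (colimit.ι M d m))) ∈ W.comap (colimit.ι M d).hom) :
    M ⟶ auxN M W where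
  app d := ModuleCat.ofHom (LinearMap.codRestrict (W.comap (colimit.ι M d).hom)
    (LinearMap.id - ((limit.π M d).hom ∘ₗ σ ∘ₗ q ∘ₗ
      (colimit.ι M d).hom))
    (fun m => by simpa using hmem d m))
  naturality {d d'} f := by
    ext m
    refine Subtype.ext ?_
    show M.map f m - limit.π M d' (σ (q (colimit.ι M d' (M.map f m)))) =
      M.map f (m - limit.π M d (σ (q (colimit.ι M d m))))
    rw [map_sub, colim_w_app, lim_w_app]

end DecompAux7
/-- Let `C` be a small connected category and `M : C ⥤ Vect_K` with canonical
limit-to-colimit map `Ψ_M` of finite rank `r`. Then `M ≅ (K_C)^r ⊕ N` for some functor `N`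
whose canonical limit-to-colimit map is zero. Here `(K_C)^r` is the constant functor at `K^r`. -/
theorem decomposition_by_generalized_rank (K : Type) [Field K] (C : Type) [SmallCategory C]
    [IsConnected C] (M : C ⥤ ModuleCat K) (c : C) (r : ℕ)
    (hfin : FiniteDimensional K (LinearMap.range (limit.π M c ≫ colimit.ι M c).hom))
    (hr : Module.finrank K (LinearMap.range (limit.π M c ≫ colimit.ι M c).hom) = r) :
    ∃ N : C ⥤ ModuleCat K,
      (∀ d : C, limit.π N d ≫ colimit.ι N d = 0) ∧
      Nonempty (M ≅ (Functor.const C).obj (ModuleCat.of K (Fin r → K)) ⊞ N) := by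
  classical
  have hconst : ∀ d : C, limit.π M d ≫ colimit.ι M d = limit.π M c ≫ colimit.ι M c :=
    fun d => constant_of_preserves_morphisms (fun d => limit.π M d ≫ colimit.ι M d)
      (fun d₁ d₂ f => by rw [← colimit.w M f, ← Category.assoc, limit.w M f]) d c
  set Ψ : limit M ⟶ colimit M := limit.π M c ≫ colimit.ι M c with hΨdef
  have hconst_app : ∀ (d : C) (x : (limit M : ModuleCat K)),
      colimit.ι M d (limit.π M d x) = Ψ x := by
    intro d x
    have h := ConcreteCategory.congr_hom (hconst d) x
    rw [ConcreteCategory.comp_apply] at h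
    exact h
  obtain ⟨W, hW⟩ := Submodule.exists_isCompl (LinearMap.range Ψ.hom)
  haveI := hfin
  let b : Module.Basis (Fin r) K (LinearMap.range Ψ.hom) := Module.finBasisOfFinrankEq K _ hr
  have hx : ∀ i : Fin r, ∃ y, Ψ y = (b i : (colimit M : ModuleCat K)) :=
    fun i => LinearMap.mem_range.mp (b i).2
  choose x hxspec using hx
  let σ : (Fin r → K) →ₗ[K] (limit M : ModuleCat K) :=
    { toFun := fun v => ∑ i, v i • x i
      map_add' := fun v w => by simp only [Pi.add_apply, add_smul, Finset.sum_add_distrib]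
      map_smul' := fun a v => by
        simp only [Pi.smul_apply, smul_eq_mul, RingHom.id_apply, mul_smul, Finset.smul_sum] }
  let P := (LinearMap.range Ψ.hom).projectionOnto W hW
  let q : (colimit M : ModuleCat K) →ₗ[K] (Fin r → K) := b.equivFun.toLinearMap ∘ₗ P
  have hσ_apply : ∀ v, σ v = ∑ i, v i • x i := fun _ => rfl
  have hq_apply : ∀ y, q y = b.equivFun (P y) := fun _ => rfl
  have hΨσ : ∀ v : Fin r → K,
      Ψ (σ v) = ((b.equivFun.symm v : LinearMap.range Ψ.hom) : (colimit M : ModuleCat K)) := by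
    intro v
    rw [hσ_apply, Module.Basis.equivFun_symm_apply, map_sum]
    push_cast
    simp only [map_smul, hxspec]
  have hqΨσ : ∀ v, q (Ψ (σ v)) = v := by
    intro v
    rw [hq_apply, hΨσ, Submodule.projectionOnto_apply_left hW]
    exact b.equivFun.apply_symm_apply v
  have hσq : ∀ y, Ψ (σ (q y)) = ((P y : LinearMap.range Ψ.hom) : (colimit M : ModuleCat K)) := by
    intro y
    rw [hq_apply, hΨσ, LinearEquiv.symm_apply_apply]
  have f2 : ∀ y ∈ W, q y = 0 := fun y hy => by
    rw [hq_apply, Submodule.projectionOnto_apply_of_mem_right hW hy, map_zero]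
  have f3 : ∀ y, y - Ψ (σ (q y)) ∈ W := by
    intro y
    rw [hσq]
    have h := Submodule.projection_add_projection_eq_self hW y
    have h2 : y - ((P y : LinearMap.range Ψ.hom) : (colimit M : ModuleCat K)) =
        ((W.linearProjOfIsCompl _ hW.symm) y : (colimit M : ModuleCat K)) :=
      sub_eq_iff_eq_add'.mpr h.symm
    rw [h2]
    exact Submodule.coe_mem _
  have hmem : ∀ (d : C) (m : M.obj d),
      m - limit.π M d (σ (q (colimit.ι M d m))) ∈ W.comap (colimit.ι M d).hom := by
    intro d m
    simp only [Submodule.mem_comap, map_sub]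
    rw [hconst_app d]
    exact f3 (colimit.ι M d m)
  let N := DecompAux7.auxN M W
  let i1 := DecompAux7.constToM M σ
  let p1 := DecompAux7.mToConst M q
  let i2 := DecompAux7.incl M W
  let p2 := DecompAux7.proj2 M σ q W hmem
  have e1 : i1 ≫ p1 = 𝟙 _ := by
    apply NatTrans.ext; funext d; apply ModuleCat.hom_ext; apply LinearMap.ext; intro v
    show q (colimit.ι M d (limit.π M d (σ v))) = v
    rw [hconst_app, hqΨσ]
  have e2 : i1 ≫ p2 = 0 := by
    apply NatTrans.ext; funext d; apply ModuleCat.hom_ext; apply LinearMap.ext; intro v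
    refine Subtype.ext ?_
    show limit.π M d (σ v) - limit.π M d (σ (q (colimit.ι M d (limit.π M d (σ v))))) = 0
    rw [hconst_app, hqΨσ, sub_self]
  have e3 : i2 ≫ p1 = 0 := by
    apply NatTrans.ext; funext d; apply ModuleCat.hom_ext; apply LinearMap.ext; intro n
    show q (colimit.ι M d n.1) = 0
    exact f2 _ n.2
  have e4 : i2 ≫ p2 = 𝟙 N := by
    apply NatTrans.ext; funext d; apply ModuleCat.hom_ext; apply LinearMap.ext; intro n
    refine Subtype.ext ?_
    show n.1 - limit.π M d (σ (q (colimit.ι M d n.1))) = n.1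
    rw [f2 _ n.2, map_zero, map_zero, sub_zero]
  have e5 : p1 ≫ i1 + p2 ≫ i2 = 𝟙 M := by
    apply NatTrans.ext; funext d
    rw [NatTrans.app_add]
    apply ModuleCat.hom_ext; apply LinearMap.ext; intro m
    rw [ModuleCat.hom_add, LinearMap.add_apply]
    show limit.π M d (σ (q (colimit.ι M d m))) +
      (m - limit.π M d (σ (q (colimit.ι M d m)))) = m
    abel
  refine ⟨N, ?_, ?_⟩
  · intro d
    haveI hmono : Mono (colimMap i2) := by
      have hret : colimMap i2 ≫ colimMap p2 = 𝟙 (colimit N) := by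
        show colim.map i2 ≫ colim.map p2 = _
        rw [← colim.map_comp, e4, colim.map_id]
        rfl
      haveI : IsSplitMono (colimMap i2) := IsSplitMono.mk' ⟨colimMap p2, hret⟩
      infer_instance
    rw [← cancel_mono (colimMap i2), Category.assoc, ι_colimMap, ← Category.assoc,
      ← limMap_π, Category.assoc, zero_comp]
    apply ModuleCat.hom_ext; apply LinearMap.ext; intro y
    show colimit.ι M d (limit.π M d (limMap i2 y)) = 0
    rw [hconst_app]
    have hW2 : Ψ (limMap i2 y) ∈ W := by
      rw [← hconst_app d]
      have hy1 : limit.π M d (limMap i2 y) = (i2.app d) (limit.π N d y) := by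
        have h := ConcreteCategory.congr_hom (limMap_π i2 d) y
        rw [ConcreteCategory.comp_apply, ConcreteCategory.comp_apply] at h
        exact h
      rw [hy1]
      exact (limit.π N d y).2
    exact (Submodule.disjoint_def.mp hW.disjoint) _ ⟨_, rfl⟩ hW2
  · refine ⟨⟨biprod.lift p1 p2, biprod.desc i1 i2, ?_, ?_⟩⟩
    · rw [biprod.lift_desc, e5]
    · apply biprod.hom_ext'
      · apply biprod.hom_ext
        · simp [e1]
        · simp [e2]
      · apply biprod.hom_ext
        · simp [e3]
        · simp [e4]
end

section
/- Let C be a small connected category and M : C → vect_K an indecomposable pointwise finite-dimensional functor. Then the canonical limit-to-colimit map Ψ_M is nonzero if and only if M is isomorphic to the constant functor K_C. -/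
open CategoryTheory CategoryTheory.Limits

/-- Let `C` be a small connected category and `M : C ⥤ vect_K` indecomposable
(pointwise finite-dimensional). Then the canonical limit-to-colimit map `Ψ_M` is nonzero if
and only if `M` is isomorphic to the constant functor `K_C`. -/
theorem indecomposable_nonzero_rank_iff_const (K : Type) [Field K] (C : Type) [SmallCategory C]
    [IsConnected C] (M : C ⥤ ModuleCat K)
    (hfd : ∀ c : C, FiniteDimensional K (M.obj c))
    (hind : ∀ A B : C ⥤ ModuleCat K, Nonempty (M ≅ A ⊞ B) →
      Limits.IsZero A ∨ Limits.IsZero B)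
    (c : C) :
    limit.π M c ≫ colimit.ι M c ≠ 0 ↔
      Nonempty (M ≅ (Functor.const C).obj (ModuleCat.of K K)) := by
  constructor
  · intro h
    -- extract an element of the limit with nonzero image in the colimit
    have hx : ∃ x : (limit M : ModuleCat K), colimit.ι M c (limit.π M c x) ≠ 0 := by
      by_contra hc
      push_neg at hc
      exact h (ModuleCat.hom_ext (LinearMap.ext fun x => by simpa using hc x))
    obtain ⟨x, hx⟩ := hx
    set y : (colimit M : ModuleCat K) := colimit.ι M c (limit.π M c x) with hy
    -- the image in the colimit is independent of the object
    have hconst : ∀ c' : C, colimit.ι M c' (limit.π M c' x) = y := by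
      intro c'
      have := constant_of_preserves_morphisms
        (fun a : C => colimit.ι M a (limit.π M a x))
        (fun a b f => by
          have h1 : limit.π M a ≫ M.map f = limit.π M b := limit.w M f
          have h2 : M.map f ≫ colimit.ι M b = colimit.ι M a := colimit.w M f
          calc colimit.ι M a (limit.π M a x)
              = (limit.π M a ≫ M.map f ≫ colimit.ι M b) x := by
                rw [h2]; rfl
            _ = colimit.ι M b (limit.π M b x) := by
                rw [← Category.assoc, h1]; rfl) c' c
      exact this
    have hyne : y ≠ 0 := hx
    -- choose a linear functional sending y to 1
    have hφ : ∃ φ : Module.Dual K (colimit M : ModuleCat K), φ y ≠ 0 := by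
      by_contra hc
      push_neg at hc
      exact hyne ((Module.forall_dual_apply_eq_zero_iff K y).mp hc)
    obtain ⟨φ, hφ⟩ := hφ
    set f : Module.Dual K (colimit M : ModuleCat K) := (φ y)⁻¹ • φ with hf
    have hfy : f y = 1 := by
      simp [hf, inv_mul_cancel₀ hφ]
    -- the natural transformation from the constant functor given by x
    let α : (Functor.const C).obj (ModuleCat.of K K) ⟶ M :=
      { app := fun a => (ModuleCat.ofHom (LinearMap.toSpanSingleton K (M.obj a) (limit.π M a x)) :
            ModuleCat.of K K ⟶ M.obj a)
        naturality := fun a b g => by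
          have h1 : limit.π M a ≫ M.map g = limit.π M b := limit.w M g
          apply ModuleCat.hom_ext; apply LinearMap.ext; intro k
          have : M.map g (limit.π M a x) = limit.π M b x := by
            rw [← h1]; rfl
          simp only [Functor.const_obj_obj, Functor.const_obj_map, Category.id_comp]
          show k • limit.π M b x = M.map g (k • limit.π M a x)
          rw [map_smul, this] }
    -- the retraction, via the functional on the colimit
    let β : M ⟶ (Functor.const C).obj (ModuleCat.of K K) :=
      { app := fun a => (ModuleCat.ofHom (f.comp (colimit.ι M a).hom) :
            M.obj a ⟶ ModuleCat.of K K)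
        naturality := fun a b g => by
          have h2 : M.map g ≫ colimit.ι M b = colimit.ι M a := colimit.w M g
          ext (v : M.obj a)
          simp only [Functor.const_obj_obj, Functor.const_obj_map, Category.comp_id]
          show f (colimit.ι M b (M.map g v)) = f (colimit.ι M a v)
          have : colimit.ι M b (M.map g v) = colimit.ι M a v := by
            rw [← h2]; rfl
          rw [this] }
    have hsplit : α ≫ β = 𝟙 _ := by
      apply NatTrans.ext; funext a; apply ModuleCat.hom_ext; apply LinearMap.ext; intro (k : K)
      show f (colimit.ι M a (k • limit.π M a x)) = k
      rw [map_smul, map_smul, hconst a, hfy, smul_eq_mul, mul_one]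
    haveI : IsSplitMono α := IsSplitMono.mk' ⟨β, hsplit⟩
    -- splitting lemma: M is the biproduct of the constant functor and the cokernel of α
    let bc := binaryBiconeOfIsSplitMonoOfCokernel (cokernelIsCokernel α)
    have hbl := isBilimitBinaryBiconeOfIsSplitMonoOfCokernel (cokernelIsCokernel α)
    let e : M ≅ (Functor.const C).obj (ModuleCat.of K K) ⊞ cokernel α :=
      biprod.uniqueUpToIso _ _ hbl
    rcases hind _ _ ⟨e⟩ with hz | hz
    · -- the constant functor is not zero
      exfalso
      have h0 : (𝟙 ((Functor.const C).obj (ModuleCat.of K K))) = 0 := hz.eq_of_src _ _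
      have h0 : (𝟙 ((Functor.const C).obj (ModuleCat.of K K))) = 0 := hz.eq_of_src _ _
      have h1 : (𝟙 (ModuleCat.of K K) : ModuleCat.of K K ⟶ ModuleCat.of K K) = 0 :=
        NatTrans.congr_app h0 c
      have h2 : (LinearMap.id : K →ₗ[K] K) = 0 := congrArg ModuleCat.Hom.hom h1
      simpa using LinearMap.congr_fun h2 1
    · exact ⟨e ≪≫ (isoBiprodZero hz).symm⟩
  · rintro ⟨e⟩
    intro h0
    -- use the iso to produce maps K → lim M and colim M → K composing to the identity
    let u : ModuleCat.of K K ⟶ limit M :=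
      limit.lift M ⟨ModuleCat.of K K, e.inv⟩
    let v : colimit M ⟶ ModuleCat.of K K :=
      colimit.desc M ⟨ModuleCat.of K K, e.hom⟩
    have hcomp : u ≫ (limit.π M c ≫ colimit.ι M c) ≫ v = 𝟙 (ModuleCat.of K K) := by
      have h1 : u ≫ limit.π M c = e.inv.app c := limit.lift_π _ _
      have h2 : colimit.ι M c ≫ v = e.hom.app c := colimit.ι_desc _ _
      rw [← Category.assoc, ← Category.assoc, h1, Category.assoc, h2]
      rw [← NatTrans.comp_app, e.inv_hom_id]
      rfl
    rw [h0] at hcomp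
    simp only [comp_zero, zero_comp] at hcomp
    have h2 : (0 : K →ₗ[K] K) = LinearMap.id := congrArg ModuleCat.Hom.hom hcomp
    simpa using (LinearMap.congr_fun h2 1).symm
end

section
/- Let F : J → C be a functor between small categories where C has finite hom-sets. If for every functor M : C → vect_K the colimit of M ∘ F is isomorphic to the colimit of M, then F is a final functor. -/
open CategoryTheory CategoryTheory.Limits

universe w

/-- A free module functor from a possibly larger universe of types. -/
noncomputable def myFree (R : Type) [Ring R] : Type w ⥤ ModuleCat.{w} R where
  obj X := ModuleCat.of R (X →₀ R)
  map {_ _} f := ModuleCat.ofHom (Finsupp.lmapDomain R R f)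
  map_id := by intros; ext1; exact Finsupp.lmapDomain_id _ _
  map_comp := by intros _ _ _ f g; ext1; exact Finsupp.lmapDomain_comp R R f g

@[simp] lemma myLift_single (R : Type) [Ring R] {X : Type w} (M : ModuleCat.{w} R)
    (ψ : X → M) (x : X) :
    (Finsupp.lift M R X ψ) (Finsupp.single x 1) = ψ x := by
  erw [Finsupp.lift_apply, Finsupp.sum_single_index] <;> simp

@[simp] lemma myFree_map_single (R : Type) [Ring R] {X Y : Type w} (f : X ⟶ Y) (x : X) :
    (myFree.{w} R).map f (Finsupp.single x 1) = Finsupp.single (f x) 1 :=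
  Finsupp.mapDomain_single

noncomputable def myFreeHomEquiv (R : Type) [Ring R] (X : Type w) (M : ModuleCat.{w} R) :
    ((myFree.{w} R).obj X ⟶ M) ≃ (X ⟶ (forget (ModuleCat.{w} R)).obj M) where
  toFun φ := TypeCat.ofHom fun x => φ (Finsupp.single x 1)
  invFun ψ := ModuleCat.ofHom (Finsupp.lift M R X ψ)
  left_inv φ := by
    apply ModuleCat.hom_ext
    apply Finsupp.lhom_ext' (fun x => LinearMap.ext_ring ?_)
    simp only [LinearMap.comp_apply, Finsupp.lsingle_apply]
    exact myLift_single R M _ x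
  right_inv ψ := by
    ext x
    exact myLift_single R M ψ x

noncomputable def myAdj (R : Type) [Ring R] : myFree.{w} R ⊣ forget (ModuleCat.{w} R) :=
  Adjunction.mkOfHomEquiv
    { homEquiv := fun X M => myFreeHomEquiv R X M
      homEquiv_naturality_left_symm := fun {X Y M} f g ↦ by
        apply ModuleCat.hom_ext
        apply Finsupp.lhom_ext' (fun x => LinearMap.ext_ring ?_)
        simp only [LinearMap.comp_apply, Finsupp.lsingle_apply, myFreeHomEquiv,
          Equiv.coe_fn_symm_mk]
        show (Finsupp.lift M R X (f ≫ g)) (Finsupp.single x 1) = (Finsupp.lift M R Y g) ((myFree.{w} R).map f (Finsupp.single x 1))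
        rw [myFree_map_single]
        rw [myLift_single R M (f ≫ g) x]
        exact (myLift_single R M g (f x)).symm }

noncomputable instance myFreePreserves (R : Type) [Ring R] :
    PreservesColimitsOfSize.{0, 0} (myFree.{w} R) :=
  (myAdj.{w} R).leftAdjoint_preservesColimits


/-- Let `F : J ⥤ C` be a functor between small categories where `C` has finite
hom-sets. If for every pointwise finite-dimensional functor `M : C ⥤ vect_K` the colimit of
`M ∘ F` is isomorphic to the colimit of `M`, then `F` is final. -/
theorem final_of_colimit_preserving (K : Type) [Field K] {J C : Type} [SmallCategory J]
    [SmallCategory C] [∀ c c' : C, Finite (c ⟶ c')] (F : J ⥤ C)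
    (h : ∀ M : C ⥤ ModuleCat K, (∀ c : C, FiniteDimensional K (M.obj c)) →
      Nonempty (colimit (F ⋙ M) ≅ colimit M)) :
    F.Final := by
  apply Functor.final_of_colimit_comp_coyoneda_iso_pUnit
  intro d
  set G : J ⥤ Type := F ⋙ coyoneda.obj (Opposite.op d) with hG
  set L := uliftFunctor.{_, 0} ⋙ myFree K with hL
  set M : C ⥤ ModuleCat K := coyoneda.obj (Opposite.op d) ⋙ L with hM
  have key : Subsingleton (colimit G) ∧ Nonempty (colimit G) := by
    have hfd : ∀ c : C, FiniteDimensional K (M.obj c) := by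
      intro c
      have : Finite (d ⟶ c) := inferInstance
      show FiniteDimensional K (ULift (d ⟶ c) →₀ K)
      infer_instance
    obtain ⟨e⟩ := h M hfd
    have e1 : colimit (F ⋙ M) ≅ L.obj (colimit G) :=
      (HasColimit.isoOfNatIso (Functor.associator F (coyoneda.obj (Opposite.op d)) L).symm)
        ≪≫ (preservesColimitIso L G).symm
    have e2 : colimit M ≅ L.obj PUnit :=
      (preservesColimitIso L (coyoneda.obj (Opposite.op d))).symm
        ≪≫ L.mapIso (Coyoneda.colimitCoyonedaIso (Opposite.op d))
    have lequiv : (ULift (colimit G) →₀ K) ≃ₗ[K] (ULift PUnit.{1} →₀ K) :=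
      (e1.symm ≪≫ e ≪≫ e2).toLinearEquiv
    have hrank := lequiv.lift_rank_eq
    rw [rank_finsupp_self, rank_finsupp_self] at hrank
    simp only [Cardinal.lift_id] at hrank
    have hcard : Cardinal.mk (ULift (colimit G)) = 1 := by
      rw [hrank]
      simp
    rw [Cardinal.eq_one_iff_unique] at hcard
    obtain ⟨hsub, hne⟩ := hcard
    constructor
    · constructor; intro a b
      exact congrArg ULift.down (hsub.allEq ⟨a⟩ ⟨b⟩)
    · exact hne.map ULift.down
  obtain ⟨hsub, hne⟩ := key
  haveI : Unique (colimit G) := ⟨⟨Classical.choice hne⟩, fun a => Subsingleton.elim _ _⟩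
  exact (Equiv.equivPUnit (colimit G)).toIso
end

section
/- Let F : J → C be a functor between small categories where C has finite hom-sets. If for every functor M : C → vect_K the limit of M ∘ F is isomorphic to the limit of M, then F is an initial functor. -/
open CategoryTheory CategoryTheory.Limits

section Aux

variable (K : Type) [Field K] {J C : Type} [SmallCategory J] [SmallCategory C]

/-- The functor `c' ↦ (Hom(c', c) → K)`. -/
@[simps]
def homFunctor (c : C) : C ⥤ ModuleCat K where
  obj c' := ModuleCat.of K ((c' ⟶ c) → K)
  map {c₁ c₂} f := ModuleCat.ofHom
    { toFun := fun φ g => φ (f ≫ g)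
      map_add' := fun _ _ => rfl
      map_smul' := fun _ _ => rfl }
  map_id := by
    intro X
    ext φ g
    show φ (𝟙 X ≫ g) = φ g
    rw [Category.id_comp]
  map_comp := by
    intro X Y Z f g
    ext φ k
    show φ ((f ≫ g) ≫ k) = φ (f ≫ g ≫ k)
    rw [Category.assoc]

variable (F : J ⥤ C) (c : C)

/-- Cone over `F ⋙ homFunctor K c` with point the functions on connected components of the
costructured arrow category. -/
def componentsCone : Cone (F ⋙ homFunctor K c) where
  pt := ModuleCat.of K (ConnectedComponents (CostructuredArrow F c) → K)
  π :=
    { app := fun j => ModuleCat.ofHom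
        { toFun := fun φ g => φ ⟦CostructuredArrow.mk g⟧
          map_add' := fun _ _ => rfl
          map_smul' := fun _ _ => rfl }
      naturality := by
        intro j j' u
        ext φ
        funext g
        show φ ⟦CostructuredArrow.mk g⟧ = φ ⟦CostructuredArrow.mk (F.map u ≫ g)⟧
        have : Zigzag (CostructuredArrow.mk g) (CostructuredArrow.mk (F.map u ≫ g)) :=
          Relation.ReflTransGen.single (Or.inr ⟨CostructuredArrow.homMk u rfl⟩)
        exact congrArg φ (Quotient.sound this) }

lemma value_eq_of_hom (s : Cone (F ⋙ homFunctor K c)) (x : s.pt) {a b : CostructuredArrow F c}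
    (f : a ⟶ b) : s.π.app a.left x a.hom = s.π.app b.left x b.hom := by
  have h1 := congrFun (congrArg (fun (m : s.pt ⟶ _) => m x) (s.w f.left)) b.hom
  have h2 : s.π.app a.left x (F.map f.left ≫ b.hom) = s.π.app b.left x b.hom := h1
  rw [CostructuredArrow.w f] at h2
  exact h2

lemma value_eq (s : Cone (F ⋙ homFunctor K c)) (x : s.pt) {a b : CostructuredArrow F c}
    (h : Zigzag a b) : s.π.app a.left x a.hom = s.π.app b.left x b.hom := by
  induction h with
  | refl => rfl
  | tail _ hz ih =>
    refine ih.trans ?_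
    rcases hz with ⟨⟨f⟩⟩ | ⟨⟨f⟩⟩
    · exact value_eq_of_hom K F c s x f
    · exact (value_eq_of_hom K F c s x f).symm

/-- The cone `componentsCone` is a limit cone. -/
def componentsConeIsLimit : IsLimit (componentsCone K F c) where
  lift s := ModuleCat.ofHom
    { toFun := fun x => Quotient.lift (fun a : CostructuredArrow F c => s.π.app a.left x a.hom)
        (fun a b h => value_eq K F c s x h)
      map_add' := by
        intro x y
        funext q
        induction q using Quotient.inductionOn with
        | h a =>
          show s.π.app a.left (x + y) a.hom = _
          rw [map_add]; rfl
      map_smul' := by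
        intro r x
        funext q
        induction q using Quotient.inductionOn with
        | h a =>
          show s.π.app a.left (r • x) a.hom = _
          rw [map_smul]; rfl }
  fac s j := by
    ext x g
    rfl
  uniq s m hm := by
    ext x
    funext q
    induction q using Quotient.inductionOn with
    | h a =>
      have h1 := congrFun (congrArg (fun (f : s.pt ⟶ _) => f x) (hm a.left)) a.hom
      have h2 : m x ⟦CostructuredArrow.mk a.hom⟧ = s.π.app a.left x a.hom := h1
      rw [← CostructuredArrow.eq_mk a] at h2
      exact h2

/-- Cone over `homFunctor K c` with point `K`. -/
def unitCone : Cone (homFunctor K c) where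
  pt := ModuleCat.of K K
  π :=
    { app := fun c' => ModuleCat.ofHom
        { toFun := fun k _ => k
          map_add' := fun _ _ => rfl
          map_smul' := fun _ _ => rfl }
      naturality := by intros; rfl }

/-- The cone `unitCone` is a limit cone. -/
def unitConeIsLimit : IsLimit (unitCone K c) where
  lift s := ModuleCat.ofHom
    { toFun := fun x => s.π.app c x (𝟙 c)
      map_add' := by
        intro x y
        show s.π.app c (x + y) (𝟙 c) = _
        rw [map_add]; rfl
      map_smul' := by
        intro r x
        show s.π.app c (r • x) (𝟙 c) = _
        rw [map_smul]; rfl }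
  fac s c' := by
    ext x
    funext g
    have h1 := congrFun (congrArg (fun (m : s.pt ⟶ _) => m x) (s.w g)) (𝟙 c)
    have h2 : s.π.app c' x (g ≫ 𝟙 c) = s.π.app c x (𝟙 c) := h1
    show s.π.app c x (𝟙 c) = s.π.app c' x g
    rw [← h2, Category.comp_id]
  uniq s m hm := by
    ext x
    have := congrFun (congrArg (fun (f : s.pt ⟶ _) => f x) (hm c)) (𝟙 c)
    exact this

end Aux

/-- Let `F : J ⥤ C` be a functor between small categories where `C` has finite
hom-sets. If for every pointwise finite-dimensional functor `M : C ⥤ vect_K` the limit of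
`M ∘ F` is isomorphic to the limit of `M`, then `F` is initial. -/
theorem initial_of_limit_preserving (K : Type) [Field K] {J C : Type} [SmallCategory J]
    [SmallCategory C] [∀ c c' : C, Finite (c ⟶ c')] (F : J ⥤ C)
    (h : ∀ M : C ⥤ ModuleCat K, (∀ c : C, FiniteDimensional K (M.obj c)) →
      Nonempty (limit (F ⋙ M) ≅ limit M)) :
    F.Initial := by
  constructor
  intro c
  have hfd : ∀ c' : C, FiniteDimensional K ((homFunctor K c).obj c') := by
    intro c'
    have : Finite (c' ⟶ c) := inferInstance
    have := Fintype.ofFinite (c' ⟶ c)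
    exact inferInstanceAs (FiniteDimensional K ((c' ⟶ c) → K))
  obtain ⟨e⟩ := h (homFunctor K c) hfd
  -- assemble an iso `(π₀ → K) ≅ K`
  have e1 : limit (F ⋙ homFunctor K c) ≅ (componentsCone K F c).pt :=
    limit.isoLimitCone ⟨componentsCone K F c, componentsConeIsLimit K F c⟩
  have e2 : limit (homFunctor K c) ≅ (unitCone K c).pt :=
    limit.isoLimitCone ⟨unitCone K c, unitConeIsLimit K c⟩
  have i : (componentsCone K F c).pt ≅ (unitCone K c).pt := e1.symm ≪≫ e ≪≫ e2
  have ℓ : (ConnectedComponents (CostructuredArrow F c) → K) ≃ₗ[K] K := i.toLinearEquiv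
  classical
  -- nonempty
  have hne : Nonempty (ConnectedComponents (CostructuredArrow F c)) := by
    by_contra hempty
    have : IsEmpty (ConnectedComponents (CostructuredArrow F c)) := not_nonempty_iff.mp hempty
    have hs : Subsingleton (ConnectedComponents (CostructuredArrow F c) → K) :=
      ⟨fun f g => funext fun x => absurd ⟨x⟩ hempty⟩
    have : Subsingleton K := ℓ.symm.toEquiv.subsingleton
    exact false_of_nontrivial_of_subsingleton K
  -- subsingleton
  have hss : Subsingleton (ConnectedComponents (CostructuredArrow F c)) := by
    constructor
    intro p q
    by_contra hpq
    set f : ConnectedComponents (CostructuredArrow F c) → K := ℓ.symm 1 with hf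
    have key : ∀ g : ConnectedComponents (CostructuredArrow F c) → K, g = ℓ g • f := by
      intro g
      apply ℓ.injective
      rw [map_smul, hf, ℓ.apply_symm_apply, smul_eq_mul, mul_one]
    set gp : ConnectedComponents (CostructuredArrow F c) → K :=
      fun x => if x = p then 1 else 0 with hgp
    set gq : ConnectedComponents (CostructuredArrow F c) → K :=
      fun x => if x = q then 1 else 0 with hgq
    have h1 : (0 : K) = ℓ gp * f q := by
      have := congrFun (key gp) q
      simpa [hgp, Ne.symm hpq, hpq] using this
    have h2 : (1 : K) = ℓ gq * f q := by
      have := congrFun (key gq) q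
      simpa [hgq] using this
    have h3 : (1 : K) = ℓ gp * f p := by
      have := congrFun (key gp) p
      simpa [hgp] using this
    -- from h1 : either ℓ gp = 0 or f q = 0
    rcases mul_eq_zero.mp h1.symm with h0 | h0
    · rw [h0, zero_mul] at h3; exact one_ne_zero h3
    · rw [h0, mul_zero] at h2; exact one_ne_zero h2
  -- conclude connectedness
  obtain ⟨q⟩ := hne
  obtain ⟨a, rfl⟩ := Quotient.exists_rep q
  have : Nonempty (CostructuredArrow F c) := ⟨a⟩
  apply zigzag_isConnected
  intro x y
  have : (⟦x⟧ : ConnectedComponents (CostructuredArrow F c)) = ⟦y⟧ := hss.allEq _ _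
  exact Quotient.exact this
end

section
/- A functor F : J → C between small categories (with C having finite hom-sets) is final if and only if colim(M ∘ F) ≅ colim M for all functors M : C → Vect_K. -/
open CategoryTheory CategoryTheory.Limits

universe w w' w''

section Aux

variable (K : Type) [Field K]

/-- A free module functor from small types into possibly large modules. -/
noncomputable def freeBig : Type w ⥤ ModuleCat.{w} K where
  obj X := ModuleCat.of K (X →₀ K)
  map {_ _} f := ModuleCat.ofHom <| Finsupp.lmapDomain _ _ (f : _ → _)

variable {K}

/-- Constructor for elements of `(freeBig K).obj X`. -/
noncomputable def freeBigMk {X : Type w} (x : X) : (freeBig K).obj X := Finsupp.single x 1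

@[ext 1200]
lemma freeBig_hom_ext {X : Type w} {M : ModuleCat.{w} K} {f g : (freeBig K).obj X ⟶ M}
    (h : ∀ (x : X), f (freeBigMk x) = g (freeBigMk x)) : f = g :=
  ModuleCat.hom_ext (Finsupp.lhom_ext' (fun x ↦ LinearMap.ext_ring (h x)))

/-- Descent along the free module. -/
noncomputable def freeBigDesc {X : Type w} {M : ModuleCat.{w} K} (f : X ⟶ (forget _).obj M) :
    (freeBig K).obj X ⟶ M :=
  ModuleCat.ofHom <| Finsupp.lift M K X f

@[simp]
lemma freeBigDesc_apply {X : Type w} {M : ModuleCat.{w} K} (f : X ⟶ (forget _).obj M) (x : X) :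
    freeBigDesc f (freeBigMk x) = f x := by
  dsimp [freeBigDesc, freeBigMk]
  erw [Finsupp.lift_apply, Finsupp.sum_single_index]
  all_goals simp

@[simp]
lemma freeBig_map_apply {X Y : Type w} (f : X ⟶ Y) (x : X) :
    (freeBig K).map f (freeBigMk x) = freeBigMk (f x) := by
  apply Finsupp.mapDomain_single

/-- The hom equivalence of the free-forgetful adjunction. -/
@[simps]
noncomputable def freeBigHomEquiv {X : Type w} {M : ModuleCat.{w} K} :
    ((freeBig K).obj X ⟶ M) ≃ (X ⟶ (forget _).obj M) where
  toFun φ := TypeCat.ofHom fun x ↦ φ (freeBigMk x)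
  invFun ψ := freeBigDesc (TypeCat.ofHom ψ)
  left_inv _ := by ext; simp
  right_inv _ := by ext; simp

variable (K)

/-- The free-forgetful adjunction for `freeBig`. -/
noncomputable def freeBigAdj : freeBig.{w} K ⊣ forget (ModuleCat.{w} K) :=
  Adjunction.mkOfHomEquiv
    { homEquiv := fun _ _ => freeBigHomEquiv
      homEquiv_naturality_left_symm := fun {X Y M} f g ↦ by
        ext; simp [freeBigHomEquiv] }

noncomputable instance : PreservesColimitsOfSize.{w', w''} (freeBig.{w} K) :=
  (freeBigAdj.{w} K).leftAdjoint_preservesColimits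

end Aux

/-- A functor `F : J ⥤ C` between small categories (with `C` having finite
hom-sets) is final if and only if `colim (M ∘ F) ≅ colim M` for all functors `M : C ⥤ Vect_K`. -/
theorem final_iff_colimit_preserving (K : Type) [Field K] {J C : Type} [SmallCategory J]
    [SmallCategory C] [∀ c c' : C, Finite (c ⟶ c')] (F : J ⥤ C) :
    F.Final ↔ ∀ M : C ⥤ ModuleCat K, Nonempty (colimit (F ⋙ M) ≅ colimit M) := by
  constructor
  · intro hF M
    exact ⟨Functor.Final.colimitIso F M⟩
  · intro h
    apply Functor.final_of_colimit_comp_coyoneda_iso_pUnit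
    intro c
    apply Classical.choice
    obtain ⟨e⟩ := h (coyoneda.obj (Opposite.op c) ⋙ uliftFunctor.{0, 0} ⋙ freeBig.{0} K)
    let G : C ⥤ Type _ := coyoneda.obj (Opposite.op c) ⋙ uliftFunctor.{0, 0}
    let e₁ : colimit ((F ⋙ G) ⋙ freeBig.{0} K) ≅
        (freeBig.{0} K).obj (colimit (F ⋙ G)) :=
      (preservesColimitIso (freeBig.{0} K) (F ⋙ G)).symm
    let e₂ : colimit (G ⋙ freeBig.{0} K) ≅ (freeBig.{0} K).obj (colimit G) :=
      (preservesColimitIso (freeBig.{0} K) G).symm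
    let e₃ : colimit (F ⋙ G) ≅ uliftFunctor.{0, 0}.obj (colimit (F ⋙ coyoneda.obj (Opposite.op c))) :=
      (preservesColimitIso uliftFunctor.{0, 0} (F ⋙ coyoneda.obj (Opposite.op c))).symm
    let e₄ : colimit G ≅ uliftFunctor.{0, 0}.obj (colimit (coyoneda.obj (Opposite.op c))) :=
      (preservesColimitIso uliftFunctor.{0, 0} (coyoneda.obj (Opposite.op c))).symm
    have etot : (freeBig.{0} K).obj
          (uliftFunctor.{0, 0}.obj (colimit (F ⋙ coyoneda.obj (Opposite.op c)))) ≅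
        (freeBig.{0} K).obj (uliftFunctor.{0, 0}.obj (colimit (coyoneda.obj (Opposite.op c)))) :=
      (freeBig.{0} K).mapIso e₃.symm ≪≫ e₁.symm ≪≫ e ≪≫ e₂ ≪≫ (freeBig.{0} K).mapIso e₄
    have hrank :
        Module.rank K ((ULift (colimit (F ⋙ coyoneda.obj (Opposite.op c)))) →₀ K) =
        Module.rank K ((ULift (colimit (coyoneda.obj (Opposite.op c)))) →₀ K) :=
      etot.toLinearEquiv.rank_eq
    rw [rank_finsupp_self, rank_finsupp_self, Cardinal.mk_uLift, Cardinal.mk_uLift] at hrank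
    simp only [Cardinal.lift_inj, Cardinal.lift_id] at hrank
    have hc : Cardinal.mk (colimit (coyoneda.obj (Opposite.op c))) = 1 := by
      rw [Cardinal.eq_one_iff_unique]
      exact ⟨(Coyoneda.colimitCoyonedaIso (Opposite.op c)).toEquiv.subsingleton,
        ⟨(Coyoneda.colimitCoyonedaIso (Opposite.op c)).toEquiv.symm PUnit.unit⟩⟩
    rw [hc] at hrank
    have : Cardinal.mk (colimit (F ⋙ coyoneda.obj (Opposite.op c))) = Cardinal.mk PUnit := by
      simpa using hrank
    exact ⟨(Classical.choice (Cardinal.eq.mp this)).toIso⟩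
end

section
/- Let J and C be small connected categories, C with finite hom-sets, and let F : J → C be both final and initial. Then for every functor M : C → vect_K, the rank of the canonical limit-to-colimit map of M equals the rank of the canonical limit-to-colimit map of M ∘ F; equivalently, the multiplicity of the constant functor K_C as a direct summand of M equals the multiplicity of K_J as a direct summand of M ∘ F. -/
open CategoryTheory CategoryTheory.Limits

/-- Rank of a linear map between `ModuleCat` objects is unchanged by pre- and post-composition
with isomorphisms. -/
lemma finrank_range_conj_iso (K : Type) [Field K] {A B A' B' : ModuleCat K}
    (e : A' ≅ A) (f : A ⟶ B) (e' : B ≅ B') :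
    Module.finrank K (LinearMap.range (e.hom ≫ f ≫ e'.hom).hom) =
      Module.finrank K (LinearMap.range f.hom) := by
  have h1 : (e.hom ≫ f ≫ e'.hom).hom
      = e'.hom.hom.comp (f.hom.comp e.hom.hom) := rfl
  rw [h1, LinearMap.range_comp, LinearMap.range_comp_of_range_eq_top]
  · have e'li : B ≃ₗ[K] B' := e'.toLinearEquiv
    have : e'.hom.hom = (e'.toLinearEquiv : B →ₗ[K] B') := rfl
    rw [this]
    exact LinearEquiv.finrank_map_eq e'.toLinearEquiv _
  · have : Function.Surjective e.hom.hom :=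
      e.toLinearEquiv.surjective
    exact LinearMap.range_eq_top.mpr this

/-- Let `J` and `C` be small connected categories, `C` with finite hom-sets, and
`F : J ⥤ C` both final and initial. Then for every pointwise finite-dimensional functor
`M : C ⥤ vect_K`, the rank of the canonical limit-to-colimit map of `M` equals the rank of the
canonical limit-to-colimit map of `M ∘ F` (equivalently, the multiplicity of the constant
functor `K_C` in `M` equals that of `K_J` in `M ∘ F`). -/
theorem rank_preserved_by_final_initial (K : Type) [Field K] {J C : Type} [SmallCategory J]
    [SmallCategory C] [IsConnected J] [IsConnected C] [∀ c c' : C, Finite (c ⟶ c')]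
    (F : J ⥤ C) (hF : F.Final) (hF' : F.Initial)
    (M : C ⥤ ModuleCat K) (hfd : ∀ c : C, FiniteDimensional K (M.obj c))
    (c : C) (j : J) :
    Module.finrank K (LinearMap.range (limit.π M c ≫ colimit.ι M c).hom) =
      Module.finrank K (LinearMap.range (limit.π (F ⋙ M) j ≫ colimit.ι (F ⋙ M) j).hom) := by
  haveI := hF
  haveI := hF'
  -- the canonical map is independent of the chosen object, by connectedness
  have key : ∀ c₁ c₂ : C,
      (limit.π M c₁ ≫ colimit.ι M c₁) = (limit.π M c₂ ≫ colimit.ι M c₂) :=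
    constant_of_preserves_morphisms _ (fun c₁ c₂ f => by
      rw [← limit.w M f, Category.assoc, colimit.w])
  rw [key c (F.obj j)]
  have h2 : (asIso (limit.pre M F)).hom ≫ (limit.π (F ⋙ M) j ≫ colimit.ι (F ⋙ M) j)
        ≫ (Functor.Final.colimitIso F M).hom
      = limit.π M (F.obj j) ≫ colimit.ι M (F.obj j) := by
    rw [asIso_hom, ← Category.assoc, ← Category.assoc, limit.pre_π, Category.assoc,
      Functor.Final.ι_colimitIso_hom]
  rw [← h2]
  exact finrank_range_conj_iso K (asIso (limit.pre M F)) _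
    (Functor.Final.colimitIso F M)
end

section
/- Let P be a nonempty poset satisfying: P ⊆ ↓S for a finite S ⊆ P, and every intersection of two subsets each having maximal elements and with nonempty intersection itself has a maximal element. Define S₀ = max P and S_{n+1} = S_n ∪ max{p ∈ P : ↑p ∩ S_n is not connected}. Then the chain stabilizes: there exists ℓ ≤ #(max P) − 1 with S_ℓ = S_{ℓ+1} = S_{ℓ+2} = ⋯. -/
/-- A subset `T` of a poset is connected (as a full subposet) if it is nonempty and any two
of its elements are joined by a finite zigzag of comparabilities within `T`. -/
def ZigzagConnected {P : Type*} [Preorder P] (T : Set P) : Prop :=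
  T.Nonempty ∧ ∀ a b : T, Relation.ReflTransGen (fun x y : T => x.1 ≤ y.1 ∨ y.1 ≤ x.1) a b

/-- The set of maximal elements of a subset `T` of a poset. -/
def maxSet {α : Type*} [PartialOrder α] (T : Set α) : Set α :=
  {a | a ∈ T ∧ ∀ b ∈ T, a ≤ b → b = a}

/-- The recursively defined subsets: `S₀ = max P` and
`S_{n+1} = S_n ∪ max {p : ↑p ∩ S_n is not connected}`. -/
def Sseq (P : Type*) [PartialOrder P] : ℕ → Set P
  | 0 => maxSet Set.univ
  | n + 1 => Sseq P n ∪ maxSet {p | ¬ ZigzagConnected (Set.Ici p ∩ Sseq P n)}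

/-- The assumptions on the poset `P`: (1) `P ⊆ ↓S` for some finite `S ⊆ P`; (2) any
intersection of two subsets, each having maximal elements and with nonempty intersection,
itself has a maximal element. -/
def AsnFin (P : Type*) [PartialOrder P] : Prop :=
  (∃ S : Set P, S.Finite ∧ ∀ p : P, ∃ s ∈ S, p ≤ s) ∧
  (∀ A B : Set P, (A ∩ B).Nonempty → (maxSet A).Nonempty → (maxSet B).Nonempty →
    (maxSet (A ∩ B)).Nonempty)

namespace SseqAux

variable {P : Type*} [PartialOrder P]

/-- Reachability (zigzag connectivity) of two points within a subset `T`. -/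
def Reach (T : Set P) (a b : P) : Prop :=
  ∃ (ha : a ∈ T) (hb : b ∈ T),
    Relation.ReflTransGen (fun x y : T => x.1 ≤ y.1 ∨ y.1 ≤ x.1) ⟨a, ha⟩ ⟨b, hb⟩

lemma Reach.refl {T : Set P} {a : P} (ha : a ∈ T) : Reach T a a :=
  ⟨ha, ha, Relation.ReflTransGen.refl⟩

lemma Reach.trans {T : Set P} {a b c : P} (h1 : Reach T a b) (h2 : Reach T b c) :
    Reach T a c := by
  obtain ⟨ha, hb, r1⟩ := h1
  obtain ⟨hb', hc, r2⟩ := h2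
  exact ⟨ha, hc, r1.trans r2⟩

lemma Reach.symm {T : Set P} {a b : P} (h : Reach T a b) : Reach T b a := by
  obtain ⟨ha, hb, r⟩ := h
  refine ⟨hb, ha, ?_⟩
  letI : Std.Symm (fun x y : T => x.1 ≤ y.1 ∨ y.1 ≤ x.1) := ⟨fun x y hxy => Or.symm hxy⟩
  exact (Relation.ReflTransGen.symmetric :
    Std.Symm (Relation.ReflTransGen (fun x y : T => x.1 ≤ y.1 ∨ y.1 ≤ x.1))).symm _ _ r

lemma Reach.single {T : Set P} {a b : P} (ha : a ∈ T) (hb : b ∈ T) (hab : a ≤ b) :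
    Reach T a b :=
  ⟨ha, hb, Relation.ReflTransGen.single (Or.inl hab)⟩

lemma Reach.mono {T T' : Set P} (hTT : T ⊆ T') {a b : P} (h : Reach T a b) :
    Reach T' a b := by
  obtain ⟨ha, hb, r⟩ := h
  refine ⟨hTT ha, hTT hb, ?_⟩
  have := Relation.ReflTransGen.lift (r := fun x y : T => x.1 ≤ y.1 ∨ y.1 ≤ x.1)
    (p := fun x y : T' => x.1 ≤ y.1 ∨ y.1 ≤ x.1)
    (fun x : T => (⟨x.1, hTT x.2⟩ : T')) (fun x y hxy => hxy) _ _ r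
  exact this

lemma zc_iff (T : Set P) :
    ZigzagConnected T ↔ T.Nonempty ∧ ∀ a ∈ T, ∀ b ∈ T, Reach T a b := by
  constructor
  · rintro ⟨hne, h⟩
    exact ⟨hne, fun a ha b hb => ⟨ha, hb, h ⟨a, ha⟩ ⟨b, hb⟩⟩⟩
  · rintro ⟨hne, h⟩
    refine ⟨hne, fun a b => ?_⟩
    obtain ⟨ha, hb, r⟩ := h a.1 a.2 b.1 b.2
    exact r

/-- "strongly good": every element is below a maximal element of the set. -/
def SG (B : Set P) : Prop := ∀ x ∈ B, ∃ y, y ∈ maxSet B ∧ x ≤ y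

section withHP

lemma exists_max_above (hP : AsnFin P) (p : P) : ∃ m, m ∈ maxSet (Set.univ : Set P) ∧ p ≤ m := by
  obtain ⟨S, hSfin, hS⟩ := hP.1
  have hne : {s ∈ S | p ≤ s}.Nonempty := by
    obtain ⟨s, hs, hps⟩ := hS p
    exact ⟨s, hs, hps⟩
  obtain ⟨m, hm, hmax⟩ := Set.Finite.exists_maximalFor id _
    (hSfin.subset (Set.sep_subset _ _)) hne
  refine ⟨m, ⟨trivial, ?_⟩, hm.2⟩
  intro b _ hmb
  obtain ⟨s, hsS, hbs⟩ := hS b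
  have hms : m ≤ s := hmb.trans hbs
  have heq : m = s := le_antisymm hms (hmax ⟨hsS, hm.2.trans hms⟩ hms)
  exact le_antisymm (le_of_le_of_eq hbs heq.symm) hmb

lemma M_finite (hP : AsnFin P) : (maxSet (Set.univ : Set P)).Finite := by
  obtain ⟨S, hSfin, hS⟩ := hP.1
  refine hSfin.subset ?_
  intro m hm
  obtain ⟨s, hs, hms⟩ := hS m
  have : s = m := hm.2 s trivial hms
  exact this ▸ hs

lemma M_subset_Sseq : ∀ n, maxSet (Set.univ : Set P) ⊆ Sseq P n
  | 0 => le_refl _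
  | n + 1 => (M_subset_Sseq n).trans Set.subset_union_left

lemma sg_Ici (hP : AsnFin P) (p : P) : SG (Set.Ici p) := by
  intro x hx
  obtain ⟨m, hm, hxm⟩ := exists_max_above hP x
  exact ⟨m, ⟨hx.trans hxm, fun b _ hmb => hm.2 b trivial hmb⟩, hxm⟩

lemma sg_Iic (m : P) : SG (Set.Iic m) := by
  intro x hx
  exact ⟨m, ⟨le_refl m, fun b hb hmb => le_antisymm hb hmb⟩, hx⟩

lemma sg_inter (hP : AsnFin P) {A B : Set P} (hA : SG A) (hB : SG B) : SG (A ∩ B) := by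
  intro x hx
  obtain ⟨yA, hyA, hxyA⟩ := hA x hx.1
  obtain ⟨yB, hyB, hxyB⟩ := hB x hx.2
  have h1 : (maxSet (Set.Ici x ∩ A)).Nonempty :=
    ⟨yA, ⟨⟨hxyA, hyA.1⟩, fun b hb hle => hyA.2 b hb.2 hle⟩⟩
  have h2 : (maxSet (Set.Ici x ∩ B)).Nonempty :=
    ⟨yB, ⟨⟨hxyB, hyB.1⟩, fun b hb hle => hyB.2 b hb.2 hle⟩⟩
  have hne : ((Set.Ici x ∩ A) ∩ (Set.Ici x ∩ B)).Nonempty :=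
    ⟨x, ⟨⟨le_refl x, hx.1⟩, ⟨le_refl x, hx.2⟩⟩⟩
  obtain ⟨z, hz⟩ := hP.2 _ _ hne h1 h2
  have hxz : x ≤ z := hz.1.1.1
  refine ⟨z, ⟨⟨hz.1.1.2, hz.1.2.2⟩, ?_⟩, hxz⟩
  intro b hb hzb
  exact hz.2 b ⟨⟨hxz.trans hzb, hb.1⟩, ⟨hxz.trans hzb, hb.2⟩⟩ hzb

lemma sg_biUnion {ι : Type*} (U : ι → Set P) :
    ∀ I : Finset ι, (∀ i ∈ I, SG (U i)) → SG (⋃ i ∈ I, U i) := by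
  classical
  intro I
  induction I using Finset.strongInduction with
  | _ I ih =>
    intro hU x hx
    simp only [Set.mem_iUnion, exists_prop] at hx
    obtain ⟨i₀, hi₀, hxU⟩ := hx
    obtain ⟨y, hy, hxy⟩ := hU i₀ hi₀ x hxU
    by_cases hmax : ∀ b ∈ ⋃ i ∈ I, U i, y ≤ b → b = y
    · exact ⟨y, ⟨Set.mem_biUnion hi₀ hy.1, hmax⟩, hxy⟩
    · push_neg at hmax
      obtain ⟨b, hb, hyb, hbne⟩ := hmax
      have hbI₀ : b ∉ U i₀ := fun h => hbne (hy.2 b h hyb)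
      have hbErase : b ∈ ⋃ i ∈ I.erase i₀, U i := by
        simp only [Set.mem_iUnion, exists_prop] at hb ⊢
        obtain ⟨j, hj, hbj⟩ := hb
        refine ⟨j, Finset.mem_erase.2 ⟨?_, hj⟩, hbj⟩
        rintro rfl
        exact hbI₀ hbj
      obtain ⟨w, hw, hbw⟩ := ih (I.erase i₀) (Finset.erase_ssubset hi₀)
        (fun i hi => hU i (Finset.mem_of_mem_erase hi)) b hbErase
      refine ⟨w, ⟨?_, ?_⟩, hxy.trans (hyb.trans hbw)⟩
      · have := hw.1
        simp only [Set.mem_iUnion, exists_prop] at this ⊢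
        obtain ⟨j, hj, hwj⟩ := this
        exact ⟨j, Finset.mem_of_mem_erase hj, hwj⟩
      · intro c hc hwc
        simp only [Set.mem_iUnion, exists_prop] at hc
        obtain ⟨j, hj, hcj⟩ := hc
        by_cases hji : j = i₀
        · subst hji
          have hyc : y ≤ c := hyb.trans (hbw.trans hwc)
          have hcy : c = y := hy.2 c hcj hyc
          have : b = y := le_antisymm (hcy ▸ (hbw.trans hwc)) hyb
          exact absurd this hbne
        · exact hw.2 c (Set.mem_biUnion (Finset.mem_erase.2 ⟨hji, hj⟩) hcj) hwc

/-- If `↑p ∩ Sₙ` is connected, so is `↑p ∩ Sₙ₊₁`. -/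
lemma zc_step (hP : AsnFin P) {p : P} {n : ℕ} (h : ZigzagConnected (Set.Ici p ∩ Sseq P n)) :
    ZigzagConnected (Set.Ici p ∩ Sseq P (n + 1)) := by
  rw [zc_iff] at h ⊢
  obtain ⟨hne, hconn⟩ := h
  have hsub : Set.Ici p ∩ Sseq P n ⊆ Set.Ici p ∩ Sseq P (n + 1) :=
    Set.inter_subset_inter_right _ Set.subset_union_left
  refine ⟨hne.mono hsub, ?_⟩
  have key : ∀ a ∈ Set.Ici p ∩ Sseq P (n + 1),
      ∃ a' ∈ Set.Ici p ∩ Sseq P n, Reach (Set.Ici p ∩ Sseq P (n + 1)) a a' := by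
    intro a ha
    obtain ⟨m, hm, ham⟩ := exists_max_above hP a
    have hm' : m ∈ Set.Ici p ∩ Sseq P n := ⟨ha.1.trans ham, M_subset_Sseq n hm⟩
    exact ⟨m, hm', Reach.single ha (hsub hm') ham⟩
  intro a ha b hb
  obtain ⟨a', ha', ra⟩ := key a ha
  obtain ⟨b', hb', rb⟩ := key b hb
  exact ra.trans (((hconn a' ha' b' hb').mono hsub).trans rb.symm)

/-- If `q` is maximal in `Bₙ`, then `↑q ∩ Sₙ₊₁` is connected (star with bottom `q`). -/
lemma zc_of_newmax {q : P} {n : ℕ}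
    (hq : q ∈ maxSet {p : P | ¬ ZigzagConnected (Set.Ici p ∩ Sseq P n)}) :
    ZigzagConnected (Set.Ici q ∩ Sseq P (n + 1)) := by
  have hqmem : q ∈ Set.Ici q ∩ Sseq P (n + 1) :=
    ⟨le_refl q, Set.mem_union_right _ hq⟩
  rw [zc_iff]
  refine ⟨⟨q, hqmem⟩, fun a ha b hb => ?_⟩
  exact (Reach.single hqmem ha ha.1).symm.trans (Reach.single hqmem hb hb.1)

/-- `Bₙ` is strongly good: every non-connected point is below a maximal such point. -/
lemma sg_B (hP : AsnFin P) (n : ℕ) : SG {p : P | ¬ ZigzagConnected (Set.Ici p ∩ Sseq P n)} := by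
  classical
  have hMfin := M_finite hP
  set D : P × P → Set P := fun q =>
    {y | y ≤ q.1 ∧ y ≤ q.2 ∧ ¬ Reach (Set.Ici y ∩ Sseq P n) q.1 q.2} with hD
  have hDsg : ∀ q : P × P, SG (D q) := by
    rintro ⟨m1, m2⟩ x hx
    obtain ⟨hx1, hx2, hxr⟩ := hx
    have hsg : SG (Set.Ici x ∩ Set.Iic m1 ∩ Set.Iic m2) :=
      sg_inter hP (sg_inter hP (sg_Ici hP x) (sg_Iic m1)) (sg_Iic m2)
    obtain ⟨z, hz, hxz⟩ := hsg x ⟨⟨le_refl x, hx1⟩, hx2⟩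
    refine ⟨z, ⟨⟨hz.1.1.2, hz.1.2, ?_⟩, ?_⟩, hxz⟩
    · intro hr
      exact hxr (hr.mono (Set.inter_subset_inter_left _ (Set.Ici_subset_Ici.2 hxz)))
    · intro b hb hzb
      exact hz.2 b ⟨⟨hxz.trans hzb, hb.1⟩, hb.2.1⟩ hzb
  have key : {p : P | ¬ ZigzagConnected (Set.Ici p ∩ Sseq P n)} =
      ⋃ q ∈ hMfin.toFinset ×ˢ hMfin.toFinset, D q := by
    ext p
    simp only [Set.mem_iUnion, Set.mem_setOf_eq, Finset.mem_product,
      Set.Finite.mem_toFinset, exists_prop]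
    constructor
    · intro hp
      obtain ⟨m0, hm0, hpm0⟩ := exists_max_above hP p
      have hm0T : m0 ∈ Set.Ici p ∩ Sseq P n := ⟨hpm0, M_subset_Sseq n hm0⟩
      have hnall : ¬ ∀ a ∈ Set.Ici p ∩ Sseq P n, ∀ b ∈ Set.Ici p ∩ Sseq P n,
          Reach (Set.Ici p ∩ Sseq P n) a b :=
        fun h => hp ((zc_iff _).2 ⟨⟨m0, hm0T⟩, h⟩)
      push_neg at hnall
      obtain ⟨a, ha, b, hb, hnab⟩ := hnall
      obtain ⟨ma, hma, hama⟩ := exists_max_above hP a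
      obtain ⟨mb, hmb, hbmb⟩ := exists_max_above hP b
      have hmaT : ma ∈ Set.Ici p ∩ Sseq P n := ⟨ha.1.trans hama, M_subset_Sseq n hma⟩
      have hmbT : mb ∈ Set.Ici p ∩ Sseq P n := ⟨hb.1.trans hbmb, M_subset_Sseq n hmb⟩
      have ra : Reach (Set.Ici p ∩ Sseq P n) a ma := Reach.single ha hmaT hama
      have rb : Reach (Set.Ici p ∩ Sseq P n) b mb := Reach.single hb hmbT hbmb
      refine ⟨(ma, mb), ⟨hma, hmb⟩, ⟨ha.1.trans hama, hb.1.trans hbmb, ?_⟩⟩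
      exact fun hr => hnab (ra.trans (hr.trans rb.symm))
    · rintro ⟨⟨m1, m2⟩, ⟨hm1, hm2⟩, hy1, hy2, hyr⟩ hzc
      exact hyr (((zc_iff _).1 hzc).2 m1 ⟨hy1, M_subset_Sseq n hm1⟩
        m2 ⟨hy2, M_subset_Sseq n hm2⟩)
  rw [key]
  exact sg_biUnion D _ (fun q _ => hDsg q)

/-- Main counting claim: a point with disconnected `↑p ∩ Sₙ` has at least `n + 2`
maximal elements of `P` above it. -/
lemma card_claim (hP : AsnFin P) : ∀ n : ℕ, ∀ p : P, ¬ ZigzagConnected (Set.Ici p ∩ Sseq P n) →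
    n + 2 ≤ (Set.Ici p ∩ maxSet (Set.univ : Set P)).ncard := by
  have hMfin := M_finite hP
  intro n
  induction n with
  | zero =>
    intro p hp
    obtain ⟨m0, hm0, hpm0⟩ := exists_max_above hP p
    have hS0 : Sseq P 0 = maxSet (Set.univ : Set P) := rfl
    have hm0T : m0 ∈ Set.Ici p ∩ Sseq P 0 := ⟨hpm0, hm0⟩
    have hnall : ¬ ∀ a ∈ Set.Ici p ∩ Sseq P 0, ∀ b ∈ Set.Ici p ∩ Sseq P 0,
        Reach (Set.Ici p ∩ Sseq P 0) a b :=
      fun h => hp ((zc_iff _).2 ⟨⟨m0, hm0T⟩, h⟩)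
    push_neg at hnall
    obtain ⟨a, ha, b, hb, hnab⟩ := hnall
    have hab : a ≠ b := fun h => hnab (h ▸ Reach.refl ha)
    have hsub : ({a, b} : Set P) ⊆ Set.Ici p ∩ maxSet Set.univ := by
      rintro x (rfl | rfl)
      · exact ⟨ha.1, ha.2⟩
      · exact ⟨hb.1, hb.2⟩
    calc (2 : ℕ) = ({a, b} : Set P).ncard := (Set.ncard_pair hab).symm
      _ ≤ _ := Set.ncard_le_ncard hsub (hMfin.subset Set.inter_subset_right)
  | succ n ih =>
    intro p hp
    have hpBn : ¬ ZigzagConnected (Set.Ici p ∩ Sseq P n) := fun h => hp (zc_step hP h)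
    have hpnm : p ∉ maxSet {q : P | ¬ ZigzagConnected (Set.Ici q ∩ Sseq P n)} :=
      fun h => hp (zc_of_newmax h)
    obtain ⟨q, hqmax, hpq⟩ := sg_B hP n p hpBn
    have hqB : ¬ ZigzagConnected (Set.Ici q ∩ Sseq P n) := hqmax.1
    have hIH := ih q hqB
    have hqS : q ∈ Sseq P (n + 1) := Set.mem_union_right _ hqmax
    have hqT : q ∈ Set.Ici p ∩ Sseq P (n + 1) := ⟨hpq, hqS⟩
    -- get two unreachable maximal elements above p (at stage n+1)
    have hnall : ¬ ∀ a ∈ Set.Ici p ∩ Sseq P (n + 1), ∀ b ∈ Set.Ici p ∩ Sseq P (n + 1),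
        Reach (Set.Ici p ∩ Sseq P (n + 1)) a b :=
      fun h => hp ((zc_iff _).2 ⟨⟨q, hqT⟩, h⟩)
    push_neg at hnall
    obtain ⟨a, ha, b, hb, hnab⟩ := hnall
    obtain ⟨ma, hma, hama⟩ := exists_max_above hP a
    obtain ⟨mb, hmb, hbmb⟩ := exists_max_above hP b
    have hmaT : ma ∈ Set.Ici p ∩ Sseq P (n + 1) :=
      ⟨ha.1.trans hama, M_subset_Sseq (n + 1) hma⟩
    have hmbT : mb ∈ Set.Ici p ∩ Sseq P (n + 1) :=
      ⟨hb.1.trans hbmb, M_subset_Sseq (n + 1) hmb⟩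
    have ra : Reach (Set.Ici p ∩ Sseq P (n + 1)) a ma := Reach.single ha hmaT hama
    have rb : Reach (Set.Ici p ∩ Sseq P (n + 1)) b mb := Reach.single hb hmbT hbmb
    have hnm : ¬ Reach (Set.Ici p ∩ Sseq P (n + 1)) ma mb :=
      fun hr => hnab (ra.trans (hr.trans rb.symm))
    -- anything above q is reachable from q
    have hq_reach : ∀ m : P, m ∈ maxSet (Set.univ : Set P) → q ≤ m →
        Reach (Set.Ici p ∩ Sseq P (n + 1)) q m := by
      intro m hm hqm
      exact Reach.single hqT ⟨hpq.trans hqm, M_subset_Sseq (n + 1) hm⟩ hqm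
    have hcase : ¬ q ≤ ma ∨ ¬ q ≤ mb := by
      by_contra hcon
      push_neg at hcon
      exact hnm ((hq_reach ma hma hcon.1).symm.trans (hq_reach mb hmb hcon.2))
    have hmono : Set.Ici q ∩ maxSet (Set.univ : Set P) ⊆
        Set.Ici p ∩ maxSet (Set.univ : Set P) :=
      Set.inter_subset_inter_left _ (Set.Ici_subset_Ici.2 hpq)
    have main : ∀ ms : P, ms ∈ maxSet (Set.univ : Set P) → p ≤ ms → ¬ q ≤ ms →
        n + 1 + 2 ≤ (Set.Ici p ∩ maxSet (Set.univ : Set P)).ncard := by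
      intro ms hms hpms hqms
      have hnotin : ms ∉ Set.Ici q ∩ maxSet (Set.univ : Set P) := fun h => hqms h.1
      have hins : insert ms (Set.Ici q ∩ maxSet (Set.univ : Set P)) ⊆
          Set.Ici p ∩ maxSet (Set.univ : Set P) := by
        rintro x (rfl | hx)
        · exact ⟨hpms, hms⟩
        · exact hmono hx
      have hfin : (Set.Ici q ∩ maxSet (Set.univ : Set P)).Finite :=
        hMfin.subset Set.inter_subset_right
      calc n + 1 + 2 = (n + 2) + 1 := by ring
        _ ≤ (Set.Ici q ∩ maxSet (Set.univ : Set P)).ncard + 1 := by omega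
        _ = (insert ms (Set.Ici q ∩ maxSet (Set.univ : Set P))).ncard :=
            (Set.ncard_insert_of_notMem hnotin hfin).symm
        _ ≤ _ := Set.ncard_le_ncard hins (hMfin.subset Set.inter_subset_right)
    rcases hcase with hc | hc
    · exact main ma hma (ha.1.trans hama) hc
    · exact main mb hmb (hb.1.trans hbmb) hc

end withHP

end SseqAux

/-- Under the assumptions on `P`, the chain `S₀ ⊆ S₁ ⊆ ⋯` stabilizes at some
`ℓ ≤ #(max P) − 1`. -/
theorem Sseq_stabilizes {P : Type*} [PartialOrder P] [Nonempty P] (hP : AsnFin P) :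
    ∃ ℓ : ℕ, ℓ ≤ (maxSet (Set.univ : Set P)).ncard - 1 ∧
      ∀ n : ℕ, ℓ ≤ n → Sseq P n = Sseq P ℓ := by
  classical
  open SseqAux in
  have hMfin := M_finite hP
  have hMne : (maxSet (Set.univ : Set P)).Nonempty := by
    obtain ⟨m, hm, _⟩ := SseqAux.exists_max_above hP (Classical.arbitrary P)
    exact ⟨m, hm⟩
  set m := (maxSet (Set.univ : Set P)).ncard with hmdef
  have hm1 : 0 < m := (Set.ncard_pos hMfin).2 hMne
  refine ⟨m - 1, le_refl _, ?_⟩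
  have hBempty : {p : P | ¬ ZigzagConnected (Set.Ici p ∩ Sseq P (m - 1))} = ∅ := by
    ext p
    simp only [Set.mem_setOf_eq, Set.mem_empty_iff_false, iff_false, not_not]
    by_contra hp
    have h1 := SseqAux.card_claim hP (m - 1) p hp
    have h2 : (Set.Ici p ∩ maxSet (Set.univ : Set P)).ncard ≤ m :=
      Set.ncard_le_ncard Set.inter_subset_right hMfin
    omega
  have hstep : Sseq P (m - 1 + 1) = Sseq P (m - 1) := by
    show Sseq P (m - 1) ∪ maxSet _ = _
    rw [hBempty]
    have : maxSet (∅ : Set P) = ∅ := by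
      ext a; simp [maxSet]
    rw [this, Set.union_empty]
  have key : ∀ k : ℕ, Sseq P (m - 1 + k) = Sseq P (m - 1) := by
    intro k
    induction k with
    | zero => rfl
    | succ j ih =>
      show Sseq P (m - 1 + j) ∪
        maxSet {p : P | ¬ ZigzagConnected (Set.Ici p ∩ Sseq P (m - 1 + j))} = _
      rw [ih]
      exact hstep
  intro n hn
  obtain ⟨k, rfl⟩ : ∃ k, n = m - 1 + k := ⟨n - (m - 1), by omega⟩
  exact key k
end

section
/- Let P satisfy: P ⊆ ↓S for finite S, and every nonempty intersection of two subsets each possessing maximal elements has a maximal element. With S₀ = max P, S_{n+1} = S_n ∪ max{p : ↑p ∩ S_n not connected}, and S_∞ = ∪_n S_n, the full embedding F : S_∞ ↪ P is a final functor; that is, for every p ∈ P the subposet ↑p ∩ S_∞ is nonempty and connected. -/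
open CategoryTheory

variable {P : Type} [PartialOrder P]

/-- zigzags lift along inclusions of subsets -/
lemma zigzag_lift {T T' : Set P} (h : T ⊆ T') {a b : T}
    (hab : Relation.ReflTransGen (fun x y : T => x.1 ≤ y.1 ∨ y.1 ≤ x.1) a b) :
    Relation.ReflTransGen (fun x y : T' => x.1 ≤ y.1 ∨ y.1 ≤ x.1)
      ⟨a.1, h a.2⟩ ⟨b.1, h b.2⟩ := by
  induction hab with
  | refl => exact .refl
  | tail _ hbc ih => exact ih.tail hbc

lemma zigzag_symm {T : Set P} : Symmetric (fun x y : T => x.1 ≤ y.1 ∨ y.1 ≤ x.1) :=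
  fun _ _ h => h.symm

/-- hub lemma -/
lemma zigzagConnected_of_hub {T : Set P} {h : P} (hh : h ∈ T)
    (H : ∀ a ∈ T, ∃ m ∈ T, a ≤ m ∧ h ≤ m) : ZigzagConnected T := by
  refine ⟨⟨h, hh⟩, ?_⟩
  have key : ∀ a : T, Relation.ReflTransGen (fun x y : T => x.1 ≤ y.1 ∨ y.1 ≤ x.1) a ⟨h, hh⟩ := by
    intro a
    obtain ⟨m, hm, ham, hhm⟩ := H a.1 a.2
    have s1 : Relation.ReflTransGen (fun x y : T => x.1 ≤ y.1 ∨ y.1 ≤ x.1) a ⟨m, hm⟩ :=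
      Relation.ReflTransGen.single (Or.inl ham)
    exact s1.tail (Or.inr hhm)
  intro a b
  exact (key a).trans (haveI : Std.Symm (fun x y : T => x.1 ≤ y.1 ∨ y.1 ≤ x.1) := ⟨zigzag_symm⟩; Std.Symm.symm _ _ (key b))

/-- if T ⊆ T' is connected and every element of T' is below an element of T, T' is connected -/
lemma zigzagConnected_of_dense {T T' : Set P} (hTT : T ⊆ T') (hc : ZigzagConnected T)
    (hd : ∀ a ∈ T', ∃ m ∈ T, a ≤ m) : ZigzagConnected T' := by
  obtain ⟨⟨x, hx⟩, hzz⟩ := hc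
  refine ⟨⟨x, hTT hx⟩, ?_⟩
  intro a b
  obtain ⟨ma, hma, hama⟩ := hd a.1 a.2
  obtain ⟨mb, hmb, hbmb⟩ := hd b.1 b.2
  have h1 : Relation.ReflTransGen (fun x y : T' => x.1 ≤ y.1 ∨ y.1 ≤ x.1) a ⟨ma, hTT hma⟩ :=
    Relation.ReflTransGen.single (Or.inl hama)
  have h2 := zigzag_lift hTT (hzz ⟨ma, hma⟩ ⟨mb, hmb⟩)
  have h3 : Relation.ReflTransGen (fun x y : T' => x.1 ≤ y.1 ∨ y.1 ≤ x.1) ⟨mb, hTT hmb⟩ b :=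
    Relation.ReflTransGen.single (Or.inr hbmb)
  exact (h1.trans h2).trans h3

/-- every element lies below a maximal element of P -/
lemma exists_max_above (hP : AsnFin P) (p : P) : ∃ m, p ≤ m ∧ m ∈ maxSet (Set.univ : Set P) := by
  obtain ⟨⟨S, hSfin, hS⟩, -⟩ := hP
  obtain ⟨s, hsS, hps⟩ := hS p
  have hne : ({t ∈ S | p ≤ t} : Set P).Nonempty := ⟨s, hsS, hps⟩
  obtain ⟨m, hm, hmax⟩ := Set.Finite.exists_maximalFor id _ (hSfin.subset (Set.sep_subset _ _)) hne
  refine ⟨m, hm.2, Set.mem_univ m, ?_⟩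
  intro b _ hmb
  obtain ⟨s', hs'S, hbs'⟩ := hS b
  have : m = s' := le_antisymm (hmb.trans hbs') (hmax ⟨hs'S, hm.2.trans (hmb.trans hbs')⟩ (hmb.trans hbs'))
  exact le_antisymm (hbs'.trans this.symm.le) hmb

lemma maxSet_Ici_nonempty (hP : AsnFin P) (p : P) : (maxSet (Set.Ici p)).Nonempty := by
  obtain ⟨m, hpm, _, hmax⟩ := exists_max_above hP p
  exact ⟨m, hpm, fun b _ h => hmax b (Set.mem_univ b) h⟩

lemma maxSet_Iic (m : P) : m ∈ maxSet (Set.Iic m) :=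
  ⟨le_refl m, fun b hb h => le_antisymm hb h⟩

/-- maximal elements of finite intersections Ici p ∩ ⋂ Iic -/
lemma maxSet_inter_biInter (hP : AsnFin P) (p : P) (F : Finset P)
    (hne : (Set.Ici p ∩ ⋂ m ∈ F, Set.Iic m).Nonempty) :
    (maxSet (Set.Ici p ∩ ⋂ m ∈ F, Set.Iic m)).Nonempty := by
  classical
  induction F using Finset.induction_on with
  | empty => simpa using maxSet_Ici_nonempty hP p
  | @insert a F ha ih =>
      have hset : (Set.Ici p ∩ ⋂ m ∈ (insert a F : Finset P), Set.Iic m)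
          = (Set.Ici p ∩ ⋂ m ∈ F, Set.Iic m) ∩ Set.Iic a := by
        simp only [Finset.mem_insert, Set.iInter_iInter_eq_or_left]
        ext x; simp [Set.mem_iInter]; tauto
      rw [hset] at hne ⊢
      refine hP.2 _ _ hne (ih ?_) ⟨a, maxSet_Iic a⟩
      obtain ⟨x, hx⟩ := hne
      exact ⟨x, hx.1⟩

lemma Sseq_zero : Sseq P 0 = maxSet (Set.univ : Set P) := rfl
lemma Sseq_succ (n : ℕ) : Sseq P (n + 1)
    = Sseq P n ∪ maxSet {p | ¬ ZigzagConnected (Set.Ici p ∩ Sseq P n)} := rfl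

lemma Sseq_zero_subset (n : ℕ) : Sseq P 0 ⊆ Sseq P n := by
  induction n with
  | zero => exact subset_rfl
  | succ n ih => exact ih.trans (by rw [Sseq_succ]; exact Set.subset_union_left)

lemma maxSet_univ_finite (hP : AsnFin P) : (maxSet (Set.univ : Set P)).Finite := by
  obtain ⟨⟨S, hSfin, hS⟩, -⟩ := hP
  refine hSfin.subset ?_
  rintro m ⟨-, hmax⟩
  obtain ⟨s, hsS, hms⟩ := hS m
  rwa [hmax s (Set.mem_univ s) hms] at hsS

lemma claim (hP : AsnFin P) :
    ∀ k, ∀ p : P, (Set.Ici p ∩ maxSet Set.univ).ncard ≤ k + 1 →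
      ZigzagConnected (Set.Ici p ∩ Sseq P k) := by
  classical
  have hMfin : ∀ p : P, (Set.Ici p ∩ maxSet Set.univ).Finite :=
    fun p => (maxSet_univ_finite hP).subset Set.inter_subset_right
  intro k
  induction k with
  | zero =>
      intro p hcard
      obtain ⟨m, hpm, hm⟩ := exists_max_above hP p
      have hmM : m ∈ Set.Ici p ∩ maxSet Set.univ := ⟨hpm, hm⟩
      refine zigzagConnected_of_hub (h := m) ⟨hpm, hm⟩ ?_
      intro a ha
      have haM : a ∈ Set.Ici p ∩ maxSet Set.univ := ⟨ha.1, ha.2⟩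
      have : a = m := (Set.ncard_le_one (hMfin p)).mp hcard a haM m hmM
      exact ⟨m, ⟨hpm, hm⟩, this.le, le_refl m⟩
  | succ k ih =>
      intro p hcard
      by_cases hc : ZigzagConnected (Set.Ici p ∩ Sseq P k)
      · refine zigzagConnected_of_dense (T := Set.Ici p ∩ Sseq P k) ?_ hc ?_
        · rw [Sseq_succ]; exact Set.inter_subset_inter_right _ Set.subset_union_left
        · intro a ha
          obtain ⟨m, ham, hm⟩ := exists_max_above hP a
          exact ⟨m, ⟨le_trans ha.1 ham, Sseq_zero_subset k hm⟩, ham⟩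
      · -- p is a "bad" point at stage k
        have hcard2 : (Set.Ici p ∩ maxSet Set.univ).ncard = k + 2 := by
          rcases Nat.lt_or_ge (Set.Ici p ∩ maxSet Set.univ).ncard (k + 2) with h | h
          · exact absurd (ih p (Nat.lt_succ_iff.mp h)) hc
          · omega
        set M : Set P := Set.Ici p ∩ maxSet Set.univ with hM
        set C : Set P := Set.Ici p ∩ ⋂ m ∈ (hMfin p).toFinset, Set.Iic m with hC
        have hmemC : ∀ x : P, x ∈ C ↔ p ≤ x ∧ ∀ m ∈ M, x ≤ m := by
          intro x
          simp only [hC, Set.mem_inter_iff, Set.mem_Ici, Set.mem_iInter, Set.mem_Iic,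
            Set.Finite.mem_toFinset, hM, Set.mem_inter_iff, Set.mem_Ici]
        have hpC : p ∈ C := (hmemC p).mpr ⟨le_refl p, fun m hm => hm.1⟩
        obtain ⟨q, hqC, hqmax⟩ := maxSet_inter_biInter hP p _ ⟨p, hpC⟩
        have hpq : p ≤ q := ((hmemC q).mp hqC).1
        have hqM : ∀ m ∈ M, q ≤ m := ((hmemC q).mp hqC).2
        -- q is bad at stage k
        have hqbad : ¬ ZigzagConnected (Set.Ici q ∩ Sseq P k) := by
          intro hqc
          apply hc
          refine zigzagConnected_of_dense (T := Set.Ici q ∩ Sseq P k) ?_ hqc ?_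
          · exact Set.inter_subset_inter_left _ (Set.Ici_subset_Ici.mpr hpq)
          · intro a ha
            obtain ⟨m, ham, hm⟩ := exists_max_above hP a
            exact ⟨m, ⟨hqM m ⟨le_trans ha.1 ham, hm⟩, Sseq_zero_subset k hm⟩, ham⟩
        -- q is maximal among bad points
        have hqSucc : q ∈ Sseq P (k + 1) := by
          rw [Sseq_succ]
          refine Or.inr ⟨hqbad, ?_⟩
          intro b hb hqb
          have hpb : p ≤ b := hpq.trans hqb
          have hMb : Set.Ici b ∩ maxSet Set.univ ⊆ M :=
            Set.inter_subset_inter_left _ (Set.Ici_subset_Ici.mpr hpb)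
          have hbcard : ¬ (Set.Ici b ∩ maxSet Set.univ).ncard ≤ k + 1 :=
            fun h => hb (ih b h)
          have hMeq : Set.Ici b ∩ maxSet Set.univ = M := by
            refine Set.eq_of_subset_of_ncard_le hMb ?_ (hMfin p)
            omega
          have hbC : b ∈ C := (hmemC b).mpr ⟨hpb, fun m hm => by
            have : m ∈ Set.Ici b ∩ maxSet Set.univ := hMeq.symm ▸ hm
            exact this.1⟩
          exact hqmax b hbC hqb
        -- conclude via hub q
        refine zigzagConnected_of_hub (h := q) ⟨hpq, hqSucc⟩ ?_
        intro a ha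
        obtain ⟨m, ham, hm⟩ := exists_max_above hP a
        have hmM : m ∈ M := ⟨le_trans ha.1 ham, hm⟩
        exact ⟨m, ⟨hmM.1, Sseq_zero_subset (k + 1) hm⟩, ham, hqM m hmM⟩

lemma conn_union (hP : AsnFin P) (p : P) :
    ZigzagConnected (Set.Ici p ∩ ⋃ n, Sseq P n) := by
  set k := (maxSet (Set.univ : Set P)).ncard
  have hcl : ZigzagConnected (Set.Ici p ∩ Sseq P k) :=
    claim hP k p (le_trans (Set.ncard_le_ncard Set.inter_subset_right
      (maxSet_univ_finite hP)) (Nat.le_succ k))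
  refine zigzagConnected_of_dense (T := Set.Ici p ∩ Sseq P k) ?_ hcl ?_
  · exact Set.inter_subset_inter_right _ (Set.subset_iUnion (Sseq P) k)
  · intro a ha
    obtain ⟨m, ham, hm⟩ := exists_max_above hP a
    exact ⟨m, ⟨le_trans ha.1 ham, Sseq_zero_subset k hm⟩, ham⟩

theorem Sinfty_aux {P : Type} [PartialOrder P] [Nonempty P] (hP : AsnFin P) :
    (show Monotone (Subtype.val : {p : P // p ∈ ⋃ n, Sseq P n} → P) from
        fun _ _ h => h).functor.Final ∧
      ∀ p : P, ZigzagConnected (Set.Ici p ∩ ⋃ n, Sseq P n) := by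
  have hconn := conn_union hP
  refine ⟨⟨fun d => ?_⟩, hconn⟩
  set F := (show Monotone (Subtype.val : {p : P // p ∈ ⋃ n, Sseq P n} → P) from
      fun _ _ h => h).functor with hF
  set T := Set.Ici d ∩ ⋃ n, Sseq P n with hT
  obtain ⟨⟨x, hx⟩, hzz⟩ := hconn d
  let g : T → StructuredArrow d F := fun a =>
    StructuredArrow.mk (Y := ⟨a.1, a.2.2⟩)
      (homOfLE (show d ≤ (F.obj ⟨a.1, a.2.2⟩ : P) from a.2.1))
  have key : ∀ a b : T,
      Relation.ReflTransGen (fun x y : T => x.1 ≤ y.1 ∨ y.1 ≤ x.1) a b →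
        Zigzag (g a) (g b) := by
    intro a b hab
    induction hab with
    | refl => exact Relation.ReflTransGen.refl
    | @tail c e _ hce ih =>
        refine ih.tail ?_
        rcases hce with h | h
        · exact Or.inl ⟨StructuredArrow.homMk
            (homOfLE (show (⟨c.1, c.2.2⟩ : {p : P // p ∈ ⋃ n, Sseq P n}) ≤ ⟨e.1, e.2.2⟩ from h))
            (Subsingleton.elim _ _)⟩
        · exact Or.inr ⟨StructuredArrow.homMk
            (homOfLE (show (⟨e.1, e.2.2⟩ : {p : P // p ∈ ⋃ n, Sseq P n}) ≤ ⟨c.1, c.2.2⟩ from h))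
            (Subsingleton.elim _ _)⟩
  have toT : ∀ j : StructuredArrow d F, { a : T // Zigzag j (g a) } := by
    intro j
    refine ⟨⟨j.right.1, leOfHom j.hom, j.right.2⟩, ?_⟩
    exact Relation.ReflTransGen.single
      (Or.inl ⟨StructuredArrow.homMk (𝟙 j.right) (Subsingleton.elim _ _)⟩)
  have : Nonempty (StructuredArrow d F) := ⟨g ⟨x, hx⟩⟩
  apply zigzag_isConnected
  intro j₁ j₂
  obtain ⟨a₁, h₁⟩ := toT j₁
  obtain ⟨a₂, h₂⟩ := toT j₂
  exact (h₁.trans (key a₁ a₂ (hzz a₁ a₂))).trans (Std.Symm.symm _ _ h₂)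


/-- Under the assumptions on `P`, with `S_∞ = ⋃ n, S_n`, the full embedding
`F : S_∞ ↪ P` is a final functor; that is, for every `p ∈ P` the subposet `↑p ∩ S_∞` is
nonempty and connected. -/
theorem Sinfty_embedding_final {P : Type} [PartialOrder P] [Nonempty P] (hP : AsnFin P) :
    (show Monotone (Subtype.val : {p : P // p ∈ ⋃ n, Sseq P n} → P) from
        fun _ _ h => h).functor.Final ∧
      ∀ p : P, ZigzagConnected (Set.Ici p ∩ ⋃ n, Sseq P n) := by
  exact Sinfty_aux hP
end

section
/- Let P satisfy the assumptions: P ⊆ ↓S for finite S ⊆ P, and every nonempty intersection of two subsets each having maximal elements has a maximal element. Define S_∞ as the union of S₀ = max P and S_{n+1} = S_n ∪ max{p : ↑p ∩ S_n not connected}. If Q ⊆ P is any subposet whose embedding G : Q ↪ P is final, then S_∞ ⊆ Q (as sets of elements). -/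
open CategoryTheory

/-- Zigzag paths transport along inclusions of subsets. -/
lemma zz_mono {P : Type*} [Preorder P] {T U : Set P} (h : T ⊆ U) {a b : T}
    (hp : Relation.ReflTransGen (fun x y : T => x.1 ≤ y.1 ∨ y.1 ≤ x.1) a b) :
    Relation.ReflTransGen (fun x y : U => x.1 ≤ y.1 ∨ y.1 ≤ x.1)
      (Set.inclusion h a) (Set.inclusion h b) :=
  Relation.ReflTransGen.lift (Set.inclusion h) (fun _ _ hr => hr) _ _ hp

/-- Any two elements of a zigzag-connected subset `T ⊆ U` are zigzag-connected in `U`. -/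
lemma connect_in {P : Type*} [Preorder P] {T U : Set P} (h : T ⊆ U)
    (hT : ZigzagConnected T) {a b : P} (ha : a ∈ T) (hb : b ∈ T) :
    Relation.ReflTransGen (fun x y : U => x.1 ≤ y.1 ∨ y.1 ≤ x.1) ⟨a, h ha⟩ ⟨b, h hb⟩ :=
  zz_mono h (hT.2 ⟨a, ha⟩ ⟨b, hb⟩)

/-- Under the assumptions on `P`, if `G : Q ↪ P` is any (not necessarily full)
subposet embedding which is a final functor, then `S_∞ ⊆ Q` (as sets of elements, i.e. every
element of `S_∞` is in the image of `G`). -/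
theorem Sinfty_minimal {P Q : Type} [PartialOrder P] [PartialOrder Q] [Nonempty P]
    (hP : AsnFin P) (G : Q →o P) (hinj : Function.Injective G)
    (hfinal : G.monotone.functor.Final) :
    (⋃ n, Sseq P n) ⊆ Set.range G := by
  set F := G.monotone.functor with hF
  intro x hx
  obtain ⟨_, ⟨n, rfl⟩, hn⟩ := hx
  induction n generalizing x with
  | zero =>
    obtain ⟨q⟩ := (hfinal.out x).is_nonempty
    have hle : x ≤ G q.right := leOfHom q.hom
    exact ⟨q.right, hn.2 _ trivial hle⟩
  | succ n ih =>
    rcases hn with hn | hn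
    · exact ih hn
    by_contra hxR
    have key : ∀ A : StructuredArrow x F, ZigzagConnected (Set.Ici (G A.right) ∩ Sseq P n) := by
      intro A
      by_contra hc
      exact hxR ⟨A.right, hn.2 _ hc (leOfHom A.hom)⟩
    have sub : ∀ A : StructuredArrow x F,
        Set.Ici (G A.right) ∩ Sseq P n ⊆ Set.Ici x ∩ Sseq P n := fun A y hy =>
      ⟨le_trans (leOfHom A.hom) hy.1, hy.2⟩
    apply hn.1
    constructor
    · obtain ⟨A⟩ := (hfinal.out x).is_nonempty
      obtain ⟨y, hy⟩ := (key A).1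
      exact ⟨y, sub A hy⟩
    · rintro ⟨a, hax, haS⟩ ⟨b, hbx, hbS⟩
      obtain ⟨Aq⟩ := (hfinal.out a).is_nonempty
      obtain ⟨Bq⟩ := (hfinal.out b).is_nonempty
      have hA : a ≤ G Aq.right := leOfHom Aq.hom
      have hB : b ≤ G Bq.right := leOfHom Bq.hom
      set A : StructuredArrow x F :=
        StructuredArrow.mk (Y := Aq.right) (homOfLE (le_trans hax hA))
      set B : StructuredArrow x F :=
        StructuredArrow.mk (Y := Bq.right) (homOfLE (le_trans hbx hB))
      haveI := hfinal.out x
      have hzz : Zigzag A B := isPreconnected_zigzag A B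
      have claim : ∀ {C : StructuredArrow x F}, Zigzag A C →
          ∀ (y z : P) (hy : y ∈ Set.Ici (G A.right) ∩ Sseq P n)
            (hz : z ∈ Set.Ici (G C.right) ∩ Sseq P n),
          Relation.ReflTransGen (fun u v : (Set.Ici x ∩ Sseq P n : Set P) =>
            u.1 ≤ v.1 ∨ v.1 ≤ u.1) ⟨y, sub A hy⟩ ⟨z, sub C hz⟩ := by
        intro C hzz
        induction hzz with
        | refl => intro y z hy hz; exact connect_in (sub A) (key A) hy hz
        | @tail B' C' hAB step ihc =>
          intro y z hy hz
          rcases step with ⟨⟨f⟩⟩ | ⟨⟨f⟩⟩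
          · have hle : G B'.right ≤ G C'.right := G.monotone (leOfHom f.right)
            exact ihc y z hy ⟨le_trans hle hz.1, hz.2⟩
          · have hle : G C'.right ≤ G B'.right := G.monotone (leOfHom f.right)
            obtain ⟨w, hw⟩ := (key B').1
            have h1 := ihc y w hy hw
            have hw' : w ∈ Set.Ici (G C'.right) ∩ Sseq P n := ⟨le_trans hle hw.1, hw.2⟩
            exact h1.trans (connect_in (sub C') (key C') hw' hz)
      obtain ⟨y₀, hy₀⟩ := (key A).1
      obtain ⟨z₀, hz₀⟩ := (key B).1
      have hay : a ≤ y₀ := le_trans hA hy₀.1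
      have hbz : b ≤ z₀ := le_trans hB hz₀.1
      exact Relation.ReflTransGen.head (Or.inl hay)
        ((claim hzz y₀ z₀ hy₀ hz₀).tail (Or.inr hbz))
end
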